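/- For every g : ℝ^k → ℝ that is weakly increasing with respect to the coordinatewise partial order and every family ξ = (ξ_i)_i with ξ_i : V_{-i} → ℝ≥0, the map b ↦ G(g, b, ξ) is weakly increasing on (ℝ≥0)^k: if b ≤ b' coordinatewise then G(g, b, ξ) ≤ G(g, b', ξ). -/

import Mathlib

open Finset

namespace SinglePeriod

/-- A single-period setting with `k` buyers: finite nonnegative value spaces and
full-support probability mass functions, independent across buyers. -/
structure Setting (k : ℕ) where
  V : Fin k → Finset ℝ
  V_nonempty : ∀ i, (V i).Nonempty
  V_nonneg : ∀ i, ∀ s ∈ V i, (0 : ℝ) ≤ s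
  f : Fin k → ℝ → ℝ
  f_pos : ∀ i, ∀ s ∈ V i, 0 < f i s
  f_sum : ∀ i, ∑ s ∈ V i, f i s = 1

variable {k : ℕ}

/-- The finite set of all (valid) value profiles. -/
noncomputable def profiles (S : Setting k) : Finset (Fin k → ℝ) :=
  Fintype.piFinset fun i => S.V i

/-- Probability of a value profile (independent coordinates). -/
noncomputable def prob (S : Setting k) (v : Fin k → ℝ) : ℝ := ∏ i, S.f i (v i)

/-- The largest element of `V i` strictly below `s`, or `0` if none exists. -/
noncomputable def predV (S : Setting k) (i : Fin k) (s : ℝ) : ℝ :=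
  WithBot.unbotD 0 (((S.V i).filter fun s' => s' < s).max)

/-- An allocation rule. -/
abbrev Alloc (k : ℕ) := (Fin k → ℝ) → Fin k → ℝ

/-- A family `ξ = (ξ_i)_i` of per-buyer expected utilities; `ξ i v` is required to
depend only on `v_{-i}` (see `ValidXi`). -/
abbrev Util (k : ℕ) := Fin k → (Fin k → ℝ) → ℝ

/-- `ξ` is a valid family: nonnegative and `ξ i` depends only on the coordinates
other than `i`. -/
def ValidXi (S : Setting k) (ξ : Util k) : Prop :=
  (∀ i v, 0 ≤ ξ i v) ∧
  (∀ (i : Fin k) (v : Fin k → ℝ) (s : ℝ), ξ i (Function.update v i s) = ξ i v)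

/-- Envelope utility `u'_i(v) = Σ_{s ∈ V_i, s ≤ v_i} x_i(s, v_{-i}) (s - pred s)`. -/
noncomputable def envU (S : Setting k) (x : Alloc k) (i : Fin k) (v : Fin k → ℝ) : ℝ :=
  ∑ s ∈ (S.V i).filter (fun s => s ≤ v i), x (Function.update v i s) i * (s - predV S i s)

/-- `ū'_i(v_{-i}) = E_{v_i}[u'_i(v)]`. -/
noncomputable def envUbar (S : Setting k) (x : Alloc k) (i : Fin k) (v : Fin k → ℝ) : ℝ :=
  ∑ s ∈ S.V i, S.f i s * envU S x i (Function.update v i s)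

/-- Balance increment `Δb_i(v) = u'_i(v) - ū'_i(v_{-i}) + ξ_i(v_{-i})`. -/
noncomputable def deltaB (S : Setting k) (x : Alloc k) (ξ : Util k)
    (v : Fin k → ℝ) (i : Fin k) : ℝ :=
  envU S x i v - envUbar S x i v + ξ i v

/-- The objective of the single-period program `P(g, b, ξ)` at allocation `x`. -/
noncomputable def obj (S : Setting k) (g : (Fin k → ℝ) → ℝ) (b : Fin k → ℝ)
    (ξ : Util k) (x : Alloc k) : ℝ :=
  ∑ v ∈ profiles S, prob S v *
    ((∑ i, (v i * x v i - ξ i v)) + g (fun i => deltaB S x ξ v i + b i))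

/-- Feasibility for the single-period program `P(g, b, ξ)`: allocation bounds,
feasibility, monotonicity, and the balance constraint. -/
def Feasible (S : Setting k) (b : Fin k → ℝ) (ξ : Util k) (x : Alloc k) : Prop :=
  (∀ v ∈ profiles S, ∀ i, 0 ≤ x v i ∧ x v i ≤ 1) ∧
  (∀ v ∈ profiles S, ∑ i, x v i ≤ 1) ∧
  (∀ (i : Fin k), ∀ v ∈ profiles S, ∀ s ∈ S.V i, ∀ s' ∈ S.V i, s ≤ s' →
    x (Function.update v i s) i ≤ x (Function.update v i s') i) ∧
  (∀ (i : Fin k), ∀ v ∈ profiles S, envUbar S x i v ≤ b i + ξ i v)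

/-- `G(g, b, ξ)`: the optimal value (supremum) of the program `P(g, b, ξ)`. -/
noncomputable def G (S : Setting k) (g : (Fin k → ℝ) → ℝ) (b : Fin k → ℝ)
    (ξ : Util k) : ℝ :=
  sSup {r : ℝ | ∃ x : Alloc k, Feasible S b ξ x ∧ r = obj S g b ξ x}



lemma mem_profiles_iff {S : Setting k} {v : Fin k → ℝ} :
    v ∈ profiles S ↔ ∀ i, v i ∈ S.V i := Fintype.mem_piFinset

lemma update_mem_profiles {S : Setting k} {v : Fin k → ℝ} (hv : v ∈ profiles S)
    {i : Fin k} {s : ℝ} (hs : s ∈ S.V i) : Function.update v i s ∈ profiles S := by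
  rw [mem_profiles_iff] at hv ⊢
  intro j
  rcases eq_or_ne j i with rfl | h
  · simpa using hs
  · rw [Function.update_of_ne h]; exact hv j

lemma predV_le {S : Setting k} {i : Fin k} {s : ℝ} (hs : s ∈ S.V i) :
    predV S i s ≤ s := by
  unfold predV
  rcases h : ((S.V i).filter fun s' => s' < s).max with _ | a
  · exact S.V_nonneg i s hs
  · have ha := Finset.mem_filter.mp (Finset.mem_of_max h)
    exact ha.2.le

lemma prob_nonneg {S : Setting k} {v : Fin k → ℝ} (hv : v ∈ profiles S) :
    0 ≤ prob S v :=
  Finset.prod_nonneg fun i _ => (S.f_pos i (v i) (mem_profiles_iff.mp hv i)).le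

lemma envU_nonneg {S : Setting k} {x : Alloc k}
    (hx : ∀ v ∈ profiles S, ∀ i, 0 ≤ x v i ∧ x v i ≤ 1)
    {i : Fin k} {v : Fin k → ℝ} (hv : v ∈ profiles S) :
    0 ≤ envU S x i v := by
  apply Finset.sum_nonneg
  intro s hs
  have hs' := (Finset.mem_filter.mp hs).1
  have h1 := hx _ (update_mem_profiles hv hs') i
  have h2 := predV_le hs'
  exact mul_nonneg h1.1 (by linarith)

lemma envU_le {S : Setting k} {x : Alloc k}
    (hx : ∀ v ∈ profiles S, ∀ i, 0 ≤ x v i ∧ x v i ≤ 1)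
    {i : Fin k} {v : Fin k → ℝ} (hv : v ∈ profiles S) :
    envU S x i v ≤ ∑ s ∈ S.V i, (s - predV S i s) := by
  calc envU S x i v
      ≤ ∑ s ∈ (S.V i).filter (fun s => s ≤ v i), (s - predV S i s) := by
        apply Finset.sum_le_sum
        intro s hs
        have hs' := (Finset.mem_filter.mp hs).1
        have h1 := hx _ (update_mem_profiles hv hs') i
        have h2 := predV_le hs'
        nlinarith [h1.1, h1.2]
    _ ≤ _ := Finset.sum_le_sum_of_subset_of_nonneg (Finset.filter_subset _ _)
          (fun s hs _ => by have := predV_le hs; linarith)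

lemma envUbar_nonneg {S : Setting k} {x : Alloc k}
    (hx : ∀ v ∈ profiles S, ∀ i, 0 ≤ x v i ∧ x v i ≤ 1)
    {i : Fin k} {v : Fin k → ℝ} (hv : v ∈ profiles S) :
    0 ≤ envUbar S x i v := by
  apply Finset.sum_nonneg
  intro s hs
  exact mul_nonneg (S.f_pos i s hs).le (envU_nonneg hx (update_mem_profiles hv hs))

/-- For every weakly increasing `g : ℝ^k → ℝ` (coordinatewise order)
and valid family `ξ`, the optimal value `b ↦ G(g, b, ξ)` is weakly increasing on
`(ℝ≥0)^k`. -/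
theorem G_monotone_in_balance
    (k : ℕ) (hk : 1 ≤ k) (S : Setting k)
    (g : (Fin k → ℝ) → ℝ) (hg : Monotone g)
    (ξ : Util k) (hξ : ValidXi S ξ)
    (b b' : Fin k → ℝ) (hb : ∀ i, 0 ≤ b i) (hb' : ∀ i, 0 ≤ b' i)
    (hbb' : b ≤ b') :
    G S g b ξ ≤ G S g b' ξ := by
  classical
  -- constants bounding everything
  set Ξ : Fin k → ℝ := fun i => ∑ w ∈ profiles S, ξ i w with hΞdef
  set C : Fin k → ℝ := fun i => (∑ s ∈ S.V i, (s - predV S i s)) + Ξ i + b' i with hCdef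
  set D : ℝ := ∑ v ∈ profiles S, prob S v * ((∑ i, v i) + g C) with hDdef
  -- the set for b' is bounded above by D
  have hBdd : ∀ (x : Alloc k), Feasible S b' ξ x → obj S g b' ξ x ≤ D := by
    intro x hx
    obtain ⟨hx01, -, -, -⟩ := hx
    apply Finset.sum_le_sum
    intro v hv
    apply mul_le_mul_of_nonneg_left _ (prob_nonneg hv)
    apply add_le_add
    · apply Finset.sum_le_sum
      intro i _
      have h1 := hx01 v hv i
      have h2 := hξ.1 i v
      have h3 := S.V_nonneg i (v i) (mem_profiles_iff.mp hv i)
      nlinarith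
    · apply hg
      intro i
      have h1 : envU S x i v ≤ ∑ s ∈ S.V i, (s - predV S i s) := envU_le hx01 hv
      have h2 : 0 ≤ envUbar S x i v := envUbar_nonneg hx01 hv
      have h3 : ξ i v ≤ Ξ i := by
        apply Finset.single_le_sum (fun w _ => hξ.1 i w) hv
      simp only [deltaB, hCdef]
      linarith
  -- the zero allocation is feasible for b
  have hzero : Feasible S b ξ (fun _ _ => 0) := by
    have hU : ∀ i v, envU S (fun _ _ => (0:ℝ)) i v = 0 := by
      intro i v; simp [envU]
    refine ⟨fun v _ i => by norm_num, fun v _ => by simp, fun i v _ s _ s' _ _ => le_rfl, ?_⟩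
    intro i v hv
    have : envUbar S (fun _ _ => (0:ℝ)) i v = 0 := by
      simp [envUbar, hU]
    rw [this]
    exact add_nonneg (hb i) (hξ.1 i v)
  -- nonemptiness of the b-set
  have hAne : {r : ℝ | ∃ x : Alloc k, Feasible S b ξ x ∧ r = obj S g b ξ x}.Nonempty :=
    ⟨obj S g b ξ (fun _ _ => 0), ⟨fun _ _ => 0, hzero, rfl⟩⟩
  have hBbdd : BddAbove {r : ℝ | ∃ x : Alloc k, Feasible S b' ξ x ∧ r = obj S g b' ξ x} := by
    refine ⟨D, ?_⟩
    rintro r ⟨x, hx, rfl⟩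
    exact hBdd x hx
  apply csSup_le hAne
  rintro r ⟨x, hxf, rfl⟩
  -- x is feasible for b'
  have hxf' : Feasible S b' ξ x := by
    obtain ⟨h1, h2, h3, h4⟩ := hxf
    refine ⟨h1, h2, h3, fun i v hv => (h4 i v hv).trans (by linarith [hbb' i])⟩
  -- objective is monotone in b
  have hobj : obj S g b ξ x ≤ obj S g b' ξ x := by
    apply Finset.sum_le_sum
    intro v hv
    apply mul_le_mul_of_nonneg_left _ (prob_nonneg hv)
    apply add_le_add_right
    apply hg
    intro i
    simp only
    linarith [hbb' i]
  exact hobj.trans (le_csSup hBbdd ⟨x, hxf', rfl⟩)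


end SinglePeriod
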